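/- Let A, B, C be three non-collinear points in the Euclidean plane, with incenter I and excenters E_A, E_B, E_C. Then the three circles through the triples (I, E_A, E_B), (I, E_B, E_C), and (I, E_A, E_C) all have the same radius; equivalently, the circumradii of these three triples of points are equal. -/

import Mathlib

set_option maxHeartbeats 1000000

/-- The incenter of the triangle `A B C`. -/
noncomputable def incenterPt (A B C : EuclideanSpace ℝ (Fin 2)) : EuclideanSpace ℝ (Fin 2) :=
  (dist B C + dist C A + dist A B)⁻¹ •
    (dist B C • A + dist C A • B + dist A B • C)

/-- The excenter of the triangle `A B C` opposite the first vertex `A`. -/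
noncomputable def excenterPt (A B C : EuclideanSpace ℝ (Fin 2)) : EuclideanSpace ℝ (Fin 2) :=
  (-dist B C + dist C A + dist A B)⁻¹ •
    ((-dist B C) • A + dist C A • B + dist A B • C)

section Aux

variable {V : Type*} [NormedAddCommGroup V] [InnerProductSpace ℝ V]

private lemma ns_aux (u v : V) (x y : ℝ) :
    ‖x • u + y • v‖ ^ 2
      = x ^ 2 * ‖u‖ ^ 2 + x * y * (2 * inner ℝ u v) + y ^ 2 * ‖v‖ ^ 2 := by
  rw [norm_add_sq_real, real_inner_smul_left, real_inner_smul_right, norm_smul, norm_smul,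
    mul_pow, mul_pow, Real.norm_eq_abs, Real.norm_eq_abs, sq_abs, sq_abs]
  ring

private lemma dist_comb_aux (A u v : V) (x y x' y' : ℝ) :
    dist (A + (x • u + y • v)) (A + (x' • u + y' • v)) = ‖(x - x') • u + (y - y') • v‖ := by
  rw [dist_eq_norm, sub_smul, sub_smul]
  congr 1
  abel

private lemma norm_scale_aux (u v : V) (P Q s : ℝ) :
    ‖(P / s) • u + (Q / s) • v‖ = |s|⁻¹ * ‖P • u + Q • v‖ := by
  rw [div_eq_mul_inv, div_eq_mul_inv, mul_comm P, mul_comm Q, mul_smul, mul_smul, ← smul_add,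
    norm_smul, Real.norm_eq_abs, abs_inv]

private lemma comb_aux1 (A B C : V) (wa wb wc d e NB NC : ℝ) (hd : d ≠ 0) (he : e ≠ 0)
    (hsum : wa + wb + wc = d) (hB : NB * d = wb * e) (hC : NC * d = wc * e) :
    d⁻¹ • (wa • A + wb • B + wc • C)
      = A + ((NB / e) • (B - A) + (NC / e) • (C - A)) := by
  have hwa : wa = d - wb - wc := by linarith
  subst hwa
  match_scalars
  · field_simp
    linear_combination hB + hC
  · field_simp
    linear_combination -hB
  · field_simp
    linear_combination -hC

private lemma comb_aux2 (A B C : V) (wa wb wc d e NB NC : ℝ) (hd : d ≠ 0) (he : e ≠ 0)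
    (hsum : wa + wb + wc = d) (hB : NB * d = wa * e) (hC : NC * d = wb * e) :
    d⁻¹ • (wa • B + wb • C + wc • A)
      = A + ((NB / e) • (B - A) + (NC / e) • (C - A)) := by
  have hwa : wa = d - wb - wc := by linarith
  subst hwa
  match_scalars
  · field_simp
    linear_combination -hB
  · field_simp
    linear_combination -hC
  · field_simp
    linear_combination hB + hC

private lemma comb_aux3 (A B C : V) (wa wb wc d e NB NC : ℝ) (hd : d ≠ 0) (he : e ≠ 0)
    (hsum : wa + wb + wc = d) (hB : NB * d = wc * e) (hC : NC * d = wa * e) :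
    d⁻¹ • (wa • C + wb • A + wc • B)
      = A + ((NB / e) • (B - A) + (NC / e) • (C - A)) := by
  have hwa : wa = d - wb - wc := by linarith
  subst hwa
  match_scalars
  · field_simp
    linear_combination -hC
  · field_simp
    linear_combination hB + hC
  · field_simp
    linear_combination -hB

private lemma li_aux (A B C : V) (hcol : ¬Collinear ℝ ({A, B, C} : Set V)) :
    LinearIndependent ℝ ![B - A, C - A] := by
  rw [linearIndependent_fin2]
  simp only [Matrix.cons_val_one, Matrix.head_cons, Matrix.cons_val_zero]
  constructor
  · intro h0
    have hCA : C = A := by rwa [sub_eq_zero] at h0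
    apply hcol
    refine (collinear_iff_of_mem (Set.mem_insert A _)).mpr ⟨B - A, ?_⟩
    intro p hp
    simp only [Set.mem_insert_iff, Set.mem_singleton_iff] at hp
    rcases hp with rfl | rfl | rfl
    · exact ⟨0, by simp⟩
    · exact ⟨1, by simp⟩
    · exact ⟨0, by simp [hCA]⟩
  · intro t heq
    apply hcol
    refine (collinear_iff_of_mem (Set.mem_insert A _)).mpr ⟨C - A, ?_⟩
    intro p hp
    simp only [Set.mem_insert_iff, Set.mem_singleton_iff] at hp
    rcases hp with rfl | rfl | rfl
    · exact ⟨0, by simp⟩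
    · exact ⟨t, by rw [vadd_eq_add, heq]; abel⟩
    · exact ⟨1, by simp⟩

private lemma affInd_aux (P u v : V) (hLI : LinearIndependent ℝ ![u, v])
    (x1 y1 x2 y2 x3 y3 : ℝ)
    (hdet : (x2 - x1) * (y3 - y1) - (x3 - x1) * (y2 - y1) ≠ 0) :
    AffineIndependent ℝ
      ![P + (x1 • u + y1 • v), P + (x2 • u + y2 • v), P + (x3 • u + y3 • v)] := by
  rw [affineIndependent_iff_not_collinear_set]
  intro hcol
  rw [collinear_iff_of_mem (Set.mem_insert _ _)] at hcol
  obtain ⟨d, hd⟩ := hcol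
  obtain ⟨r2, hr2⟩ := hd (P + (x2 • u + y2 • v))
    (Set.mem_insert_of_mem _ (Set.mem_insert _ _))
  obtain ⟨r3, hr3⟩ := hd (P + (x3 • u + y3 • v))
    (Set.mem_insert_of_mem _ (Set.mem_insert_of_mem _ rfl))
  have h2 : (x2 - x1) • u + (y2 - y1) • v = r2 • d := by
    have e : (P + (x2 • u + y2 • v)) - (P + (x1 • u + y1 • v)) = r2 • d := by
      rw [hr2, vadd_eq_add]; abel
    rw [← e, sub_smul, sub_smul]; abel
  have h3 : (x3 - x1) • u + (y3 - y1) • v = r3 • d := by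
    have e : (P + (x3 • u + y3 • v)) - (P + (x1 • u + y1 • v)) = r3 • d := by
      rw [hr3, vadd_eq_add]; abel
    rw [← e, sub_smul, sub_smul]; abel
  have hcomb : (r3 * (x2 - x1) - r2 * (x3 - x1)) • u
      + (r3 * (y2 - y1) - r2 * (y3 - y1)) • v = 0 := by
    have e : r3 • ((x2 - x1) • u + (y2 - y1) • v)
        - r2 • ((x3 - x1) • u + (y3 - y1) • v) = 0 := by
      rw [h2, h3, smul_smul, smul_smul, mul_comm r3 r2, sub_self]
    calc (r3 * (x2 - x1) - r2 * (x3 - x1)) • u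
        + (r3 * (y2 - y1) - r2 * (y3 - y1)) • v
        = r3 • ((x2 - x1) • u + (y2 - y1) • v)
          - r2 • ((x3 - x1) • u + (y3 - y1) • v) := by
          module
      _ = 0 := e
  obtain ⟨hs, ht⟩ := LinearIndependent.pair_iff.mp hLI _ _ hcomb
  have hr2z : r2 = 0 := by
    have h0 : r2 * ((x2 - x1) * (y3 - y1) - (x3 - x1) * (y2 - y1)) = 0 := by
      linear_combination (y2 - y1) * hs - (x2 - x1) * ht
    exact (mul_eq_zero.mp h0).resolve_right hdet
  have h20 : (x2 - x1) • u + (y2 - y1) • v = 0 := by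
    rw [h2, hr2z, zero_smul]
  obtain ⟨hx, hy⟩ := LinearIndependent.pair_iff.mp hLI _ _ h20
  exact hdet (by rw [hx, hy]; ring)

end Aux

/-- The three circles through the triples `(I, E_A, E_B)`, `(I, E_B, E_C)` and
`(I, E_A, E_C)` all have the same radius: each of the three triples is
non-collinear and they lie on circles of one common radius `r`. -/
theorem equal_circumradii (A B C : EuclideanSpace ℝ (Fin 2))
    (h : AffineIndependent ℝ ![A, B, C]) :
    AffineIndependent ℝ ![incenterPt A B C, excenterPt A B C, excenterPt B C A] ∧
    AffineIndependent ℝ ![incenterPt A B C, excenterPt B C A, excenterPt C A B] ∧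
    AffineIndependent ℝ ![incenterPt A B C, excenterPt A B C, excenterPt C A B] ∧
    ∃ r : ℝ,
      (∃ O : EuclideanSpace ℝ (Fin 2), dist (incenterPt A B C) O = r ∧
        dist (excenterPt A B C) O = r ∧ dist (excenterPt B C A) O = r) ∧
      (∃ O : EuclideanSpace ℝ (Fin 2), dist (incenterPt A B C) O = r ∧
        dist (excenterPt B C A) O = r ∧ dist (excenterPt C A B) O = r) ∧
      (∃ O : EuclideanSpace ℝ (Fin 2), dist (incenterPt A B C) O = r ∧
        dist (excenterPt A B C) O = r ∧ dist (excenterPt C A B) O = r) := by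
  classical
  have hcol : ¬Collinear ℝ ({A, B, C} : Set (EuclideanSpace ℝ (Fin 2))) :=
    affineIndependent_iff_not_collinear_set.mp h
  obtain ⟨a, haeq⟩ : ∃ x : ℝ, dist B C = x := ⟨_, rfl⟩
  obtain ⟨b, hbeq⟩ : ∃ x : ℝ, dist C A = x := ⟨_, rfl⟩
  obtain ⟨c, hceq⟩ : ∃ x : ℝ, dist A B = x := ⟨_, rfl⟩
  have hAB : A ≠ B := fun e => by
    have := h.injective (show ![A, B, C] 0 = ![A, B, C] 1 by simpa using e)
    exact absurd this (by decide)
  have hBC : B ≠ C := fun e => by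
    have := h.injective (show ![A, B, C] 1 = ![A, B, C] 2 by simpa using e)
    exact absurd this (by decide)
  have hCA : C ≠ A := fun e => by
    have := h.injective (show ![A, B, C] 2 = ![A, B, C] 0 by simpa using e)
    exact absurd this (by decide)
  have ha : 0 < a := haeq ▸ dist_pos.mpr hBC
  have hb : 0 < b := hbeq ▸ dist_pos.mpr hCA
  have hc : 0 < c := hceq ▸ dist_pos.mpr hAB
  have hta : a < b + c := by
    rcases eq_or_lt_of_le (dist_triangle B A C) with h' | h'
    · exfalso
      apply hcol
      have hw : Wbtw ℝ B A C := dist_add_dist_eq_iff.mp h'.symm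
      have hset : ({B, A, C} : Set (EuclideanSpace ℝ (Fin 2))) = {A, B, C} := by
        ext p; simp; tauto
      rw [← hset]; exact hw.collinear
    · have e1 : dist B A = c := by rw [← hceq, dist_comm]
      have e2 : dist A C = b := by rw [← hbeq, dist_comm]
      rw [e1, e2, haeq] at h'
      linarith
  have htb : b < a + c := by
    rcases eq_or_lt_of_le (dist_triangle C B A) with h' | h'
    · exfalso
      apply hcol
      have hw : Wbtw ℝ C B A := dist_add_dist_eq_iff.mp h'.symm
      have hset : ({C, B, A} : Set (EuclideanSpace ℝ (Fin 2))) = {A, B, C} := by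
        ext p; simp; tauto
      rw [← hset]; exact hw.collinear
    · have e1 : dist C B = a := by rw [← haeq, dist_comm]
      have e2 : dist B A = c := by rw [← hceq, dist_comm]
      rw [e1, e2, hbeq] at h'
      linarith
  have htc : c < a + b := by
    rcases eq_or_lt_of_le (dist_triangle A C B) with h' | h'
    · exfalso
      apply hcol
      have hw : Wbtw ℝ A C B := dist_add_dist_eq_iff.mp h'.symm
      have hset : ({A, C, B} : Set (EuclideanSpace ℝ (Fin 2))) = {A, B, C} := by
        ext p; simp; tauto
      rw [← hset]; exact hw.collinear
    · have e1 : dist A C = b := by rw [← hbeq, dist_comm]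
      have e2 : dist C B = a := by rw [← haeq, dist_comm]
      rw [e1, e2, hceq] at h'
      linarith
  have hq : a + b + c ≠ 0 := by intro e; linarith
  have hqa : -a + b + c ≠ 0 := by intro e; linarith
  have hqb : a - b + c ≠ 0 := by intro e; linarith
  have hqc : a + b - c ≠ 0 := by intro e; linarith
  have hdEB : -b + c + a ≠ 0 := by intro e; linarith
  have hdEC : -c + a + b ≠ 0 := by intro e; linarith
  have hD : (a + b + c) * (-a + b + c) * (a - b + c) * (a + b - c) ≠ 0 :=
    mul_ne_zero (mul_ne_zero (mul_ne_zero hq hqa) hqb) hqc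
  obtain ⟨u, hueq⟩ : ∃ w : EuclideanSpace ℝ (Fin 2), B - A = w := ⟨_, rfl⟩
  obtain ⟨v, hveq⟩ : ∃ w : EuclideanSpace ℝ (Fin 2), C - A = w := ⟨_, rfl⟩
  have hc2 : ‖u‖ ^ 2 = c ^ 2 := by rw [← hueq, ← hceq, dist_eq_norm, norm_sub_rev]
  have hb2 : ‖v‖ ^ 2 = b ^ 2 := by rw [← hveq, ← hbeq, dist_eq_norm]
  have hm : 2 * inner ℝ u v = b ^ 2 + c ^ 2 - a ^ 2 := by
    have h1 : ‖u - v‖ ^ 2 = a ^ 2 := by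
      have huv : u - v = B - C := by rw [← hueq, ← hveq]; abel
      rw [huv, ← haeq, dist_eq_norm]
    have h2 := norm_sub_sq_real u v
    rw [h1, hb2, hc2] at h2
    linarith
  have hLI : LinearIndependent ℝ ![u, v] := by
    rw [← hueq, ← hveq]; exact li_aux A B C hcol
  -- the four points in coordinates over the common denominator
  have hI : incenterPt A B C
      = A + (((b * (-a + b + c) * (a - b + c) * (a + b - c)) / ((a + b + c) * (-a + b + c) * (a - b + c) * (a + b - c))) • u + ((c * (-a + b + c) * (a - b + c) * (a + b - c)) / ((a + b + c) * (-a + b + c) * (a - b + c) * (a + b - c))) • v) := by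
    rw [incenterPt, haeq, hbeq, hceq,
      comb_aux1 A B C a b c (a + b + c) ((a + b + c) * (-a + b + c) * (a - b + c) * (a + b - c)) (b * (-a + b + c) * (a - b + c) * (a + b - c)) (c * (-a + b + c) * (a - b + c) * (a + b - c)) hq hD (by ring) (by ring) (by ring),
      hueq, hveq]
  have hEA : excenterPt A B C
      = A + (((b * (a + b + c) * (a - b + c) * (a + b - c)) / ((a + b + c) * (-a + b + c) * (a - b + c) * (a + b - c))) • u + ((c * (a + b + c) * (a - b + c) * (a + b - c)) / ((a + b + c) * (-a + b + c) * (a - b + c) * (a + b - c))) • v) := by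
    rw [excenterPt, haeq, hbeq, hceq,
      comb_aux1 A B C (-a) b c (-a + b + c) ((a + b + c) * (-a + b + c) * (a - b + c) * (a + b - c)) (b * (a + b + c) * (a - b + c) * (a + b - c)) (c * (a + b + c) * (a - b + c) * (a + b - c)) hqa hD (by ring) (by ring)
        (by ring),
      hueq, hveq]
  have hEB : excenterPt B C A
      = A + (((-(b * (a + b + c) * (-a + b + c) * (a + b - c))) / ((a + b + c) * (-a + b + c) * (a - b + c) * (a + b - c))) • u + ((c * (a + b + c) * (-a + b + c) * (a + b - c)) / ((a + b + c) * (-a + b + c) * (a - b + c) * (a + b - c))) • v) := by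
    rw [excenterPt, hbeq, hceq, haeq,
      comb_aux2 A B C (-b) c a (-b + c + a) ((a + b + c) * (-a + b + c) * (a - b + c) * (a + b - c)) (-(b * (a + b + c) * (-a + b + c) * (a + b - c))) (c * (a + b + c) * (-a + b + c) * (a + b - c)) hdEB hD (by ring) (by ring)
        (by ring),
      hueq, hveq]
  have hEC : excenterPt C A B
      = A + (((b * (a + b + c) * (-a + b + c) * (a - b + c)) / ((a + b + c) * (-a + b + c) * (a - b + c) * (a + b - c))) • u + ((-(c * (a + b + c) * (-a + b + c) * (a - b + c))) / ((a + b + c) * (-a + b + c) * (a - b + c) * (a + b - c))) • v) := by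
    rw [excenterPt, hceq, haeq, hbeq,
      comb_aux3 A B C (-c) a b (-c + a + b) ((a + b + c) * (-a + b + c) * (a - b + c) * (a + b - c)) (b * (a + b + c) * (-a + b + c) * (a - b + c)) (-(c * (a + b + c) * (-a + b + c) * (a - b + c))) hdEC hD (by ring) (by ring)
        (by ring),
      hueq, hveq]
  have keyP : ∀ P Q P' Q' : ℝ,
      P ^ 2 * c ^ 2 + P * Q * (b ^ 2 + c ^ 2 - a ^ 2) + Q ^ 2 * b ^ 2
        = P' ^ 2 * c ^ 2 + P' * Q' * (b ^ 2 + c ^ 2 - a ^ 2) + Q' ^ 2 * b ^ 2 →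
      ‖P • u + Q • v‖ = ‖P' • u + Q' • v‖ := by
    intro P Q P' Q' hxy
    have h2 : ‖P • u + Q • v‖ ^ 2 = ‖P' • u + Q' • v‖ ^ 2 := by
      rw [ns_aux, ns_aux, hb2, hc2, hm]
      linear_combination hxy
    exact (sq_eq_sq₀ (norm_nonneg _) (norm_nonneg _)).mp h2
  have hnum : 0 < 4 * a * b * c := by
    have := mul_pos (mul_pos ha hb) hc
    linarith
  have h1 : 0 < a + b + c := by linarith
  have h2 : 0 < -a + b + c := by linarith
  have h3 : 0 < a - b + c := by linarith
  have h4 : 0 < a + b - c := by linarith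
  refine ⟨?_, ?_, ?_, ?_⟩
  · rw [hI, hEA, hEB]
    apply affInd_aux _ _ _ hLI
    rw [div_sub_div_same, div_sub_div_same, div_sub_div_same, div_sub_div_same,
      div_mul_div_comm, div_mul_div_comm, div_sub_div_same]
    have hMe : ((b * (a + b + c) * (a - b + c) * (a + b - c)) - (b * (-a + b + c) * (a - b + c) * (a + b - c))) * ((c * (a + b + c) * (-a + b + c) * (a + b - c)) - (c * (-a + b + c) * (a - b + c) * (a + b - c)))
        - ((-(b * (a + b + c) * (-a + b + c) * (a + b - c))) - (b * (-a + b + c) * (a - b + c) * (a + b - c))) * ((c * (a + b + c) * (a - b + c) * (a + b - c)) - (c * (-a + b + c) * (a - b + c) * (a + b - c)))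
        = 4 * a * b * c * ((a + b + c) * ((-a + b + c) * ((a - b + c) * (a + b - c) ^ 2))) := by
      ring
    rw [hMe]
    exact div_ne_zero
      (ne_of_gt (mul_pos hnum (mul_pos h1 (mul_pos h2 (mul_pos h3 (pow_pos h4 2))))))
      (mul_ne_zero hD hD)
  · rw [hI, hEB, hEC]
    apply affInd_aux _ _ _ hLI
    rw [div_sub_div_same, div_sub_div_same, div_sub_div_same, div_sub_div_same,
      div_mul_div_comm, div_mul_div_comm, div_sub_div_same]
    have hMe : ((-(b * (a + b + c) * (-a + b + c) * (a + b - c))) - (b * (-a + b + c) * (a - b + c) * (a + b - c))) * ((-(c * (a + b + c) * (-a + b + c) * (a - b + c))) - (c * (-a + b + c) * (a - b + c) * (a + b - c)))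
        - ((b * (a + b + c) * (-a + b + c) * (a - b + c)) - (b * (-a + b + c) * (a - b + c) * (a + b - c))) * ((c * (a + b + c) * (-a + b + c) * (a + b - c)) - (c * (-a + b + c) * (a - b + c) * (a + b - c)))
        = 4 * a * b * c * ((a + b + c) * ((-a + b + c) ^ 2 * ((a - b + c) * (a + b - c)))) := by
      ring
    rw [hMe]
    exact div_ne_zero
      (ne_of_gt (mul_pos hnum (mul_pos h1 (mul_pos (pow_pos h2 2) (mul_pos h3 h4)))))
      (mul_ne_zero hD hD)
  · rw [hI, hEA, hEC]
    apply affInd_aux _ _ _ hLI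
    rw [div_sub_div_same, div_sub_div_same, div_sub_div_same, div_sub_div_same,
      div_mul_div_comm, div_mul_div_comm, div_sub_div_same]
    have hMe : ((b * (a + b + c) * (a - b + c) * (a + b - c)) - (b * (-a + b + c) * (a - b + c) * (a + b - c))) * ((-(c * (a + b + c) * (-a + b + c) * (a - b + c))) - (c * (-a + b + c) * (a - b + c) * (a + b - c)))
        - ((b * (a + b + c) * (-a + b + c) * (a - b + c)) - (b * (-a + b + c) * (a - b + c) * (a + b - c))) * ((c * (a + b + c) * (a - b + c) * (a + b - c)) - (c * (-a + b + c) * (a - b + c) * (a + b - c)))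
        = -(4 * a * b * c * ((a + b + c) * ((-a + b + c) * ((a - b + c) ^ 2 * (a + b - c))))) := by
      ring
    rw [hMe]
    exact div_ne_zero
      (neg_ne_zero.mpr
        (ne_of_gt (mul_pos hnum (mul_pos h1 (mul_pos h2 (mul_pos (pow_pos h3 2) h4))))))
      (mul_ne_zero hD hD)
  · refine ⟨|(a + b + c) * (-a + b + c) * (a - b + c) * (a + b - c)|⁻¹ * ‖((b * (-a + b + c) * (a - b + c) * (a + b - c)) - (2 * b ^ 2 * (c ^ 2 + a ^ 2 - b ^ 2) - b * (a + b + c) * (-a + b + c) * (a - b + c))) • u + ((c * (-a + b + c) * (a - b + c) * (a + b - c)) - (2 * c ^ 2 * (a ^ 2 + b ^ 2 - c ^ 2) + c * (a + b + c) * (-a + b + c) * (a - b + c))) • v‖,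
      ⟨A + (((2 * b ^ 2 * (c ^ 2 + a ^ 2 - b ^ 2) - b * (a + b + c) * (-a + b + c) * (a - b + c)) / ((a + b + c) * (-a + b + c) * (a - b + c) * (a + b - c))) • u + ((2 * c ^ 2 * (a ^ 2 + b ^ 2 - c ^ 2) + c * (a + b + c) * (-a + b + c) * (a - b + c)) / ((a + b + c) * (-a + b + c) * (a - b + c) * (a + b - c))) • v), ?_, ?_, ?_⟩,
      ⟨A + (((2 * b ^ 2 * (c ^ 2 + a ^ 2 - b ^ 2) - b * (a + b + c) * (a - b + c) * (a + b - c)) / ((a + b + c) * (-a + b + c) * (a - b + c) * (a + b - c))) • u + ((2 * c ^ 2 * (a ^ 2 + b ^ 2 - c ^ 2) - c * (a + b + c) * (a - b + c) * (a + b - c)) / ((a + b + c) * (-a + b + c) * (a - b + c) * (a + b - c))) • v), ?_, ?_, ?_⟩,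
      ⟨A + (((2 * b ^ 2 * (c ^ 2 + a ^ 2 - b ^ 2) + b * (a + b + c) * (-a + b + c) * (a + b - c)) / ((a + b + c) * (-a + b + c) * (a - b + c) * (a + b - c))) • u + ((2 * c ^ 2 * (a ^ 2 + b ^ 2 - c ^ 2) - c * (a + b + c) * (-a + b + c) * (a + b - c)) / ((a + b + c) * (-a + b + c) * (a - b + c) * (a + b - c))) • v), ?_, ?_, ?_⟩⟩
    · rw [hI, dist_comb_aux, div_sub_div_same, div_sub_div_same, norm_scale_aux]
    · rw [hEA, dist_comb_aux, div_sub_div_same, div_sub_div_same, norm_scale_aux]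
      congr 1
      exact keyP _ _ _ _ (by ring)
    · rw [hEB, dist_comb_aux, div_sub_div_same, div_sub_div_same, norm_scale_aux]
      congr 1
      exact keyP _ _ _ _ (by ring)
    · rw [hI, dist_comb_aux, div_sub_div_same, div_sub_div_same, norm_scale_aux]
      congr 1
      exact keyP _ _ _ _ (by ring)
    · rw [hEB, dist_comb_aux, div_sub_div_same, div_sub_div_same, norm_scale_aux]
      congr 1
      exact keyP _ _ _ _ (by ring)
    · rw [hEC, dist_comb_aux, div_sub_div_same, div_sub_div_same, norm_scale_aux]
      congr 1
      exact keyP _ _ _ _ (by ring)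
    · rw [hI, dist_comb_aux, div_sub_div_same, div_sub_div_same, norm_scale_aux]
      congr 1
      exact keyP _ _ _ _ (by ring)
    · rw [hEA, dist_comb_aux, div_sub_div_same, div_sub_div_same, norm_scale_aux]
      congr 1
      exact keyP _ _ _ _ (by ring)
    · rw [hEC, dist_comb_aux, div_sub_div_same, div_sub_div_same, norm_scale_aux]
      congr 1
      exact keyP _ _ _ _ (by ring)
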